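/- In the F^α-scheme, the record indicators are jointly independent: if X_1, ..., X_n are independent with X_k having distribution function F^{α_k} for a common continuous F, and I_k = 1 when X_k > max(X_1,...,X_{k-1}) (I_1 = 1), then the events {I_1 = 1}, ..., {I_n = 1} are jointly independent. -/

import Mathlib

open MeasureTheory ProbabilityTheory Filter Set
open scoped ENNReal NNReal

noncomputable section FAlphaAux
variable {S a c t : ℝ}

/-- clip to `[0,1]` -/
def projT (t : ℝ) : ℝ := max (min t 1) 0

lemma projT_mem (t : ℝ) : projT t ∈ Icc (0:ℝ) 1 :=
  ⟨le_max_right _ _, max_le (min_le_right _ _) zero_le_one⟩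

lemma projT_of_mem {t : ℝ} (h : t ∈ Icc (0:ℝ) 1) : projT t = t := by
  simp [projT, min_eq_left h.2, max_eq_left h.1]

lemma projT_of_le {t : ℝ} (h : t ≤ 0) : projT t = 0 :=
  max_eq_right (le_trans (min_le_left _ _) h)

lemma projT_of_ge {t : ℝ} (h : 1 ≤ t) : projT t = 1 := by
  simp [projT, min_eq_right h]

lemma projT_mono : Monotone projT := fun a b hab => by
  dsimp [projT]; gcongr

/-- density measure with CDF `t ^ S` on `[0,1]` -/
def rhoD (S : ℝ) : Measure ℝ :=
  volume.withDensity ((Set.Ioc (0:ℝ) 1).indicator fun u => ENNReal.ofReal (S * u ^ (S - 1)))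

lemma rhoD_apply {S : ℝ} {s : Set ℝ} (hs : MeasurableSet s) :
    rhoD S s = ∫⁻ u in s ∩ Ioc 0 1, ENNReal.ofReal (S * u ^ (S - 1)) := by
  rw [rhoD, withDensity_apply _ hs, setLIntegral_indicator measurableSet_Ioc,
    Set.inter_comm]

lemma lint_Ioc_rpow {S b : ℝ} (hS : 0 < S) (hb0 : 0 ≤ b) :
    ∫⁻ u in Ioc 0 b, ENNReal.ofReal (S * u ^ (S - 1)) = ENNReal.ofReal (b ^ S) := by
  have hint : IntegrableOn (fun u => S * u ^ (S - 1)) (Ioc 0 b) volume := by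
    apply Integrable.const_mul
    have := (intervalIntegral.intervalIntegrable_rpow' (a := 0) (b := b) (r := S - 1) (by linarith))
    rwa [intervalIntegrable_iff_integrableOn_Ioc_of_le hb0] at this
  rw [← ofReal_integral_eq_lintegral_ofReal hint]
  · congr 1
    rw [← intervalIntegral.integral_of_le hb0, intervalIntegral.integral_const_mul,
      integral_rpow (Or.inl (by linarith))]
    rw [sub_add_cancel, Real.zero_rpow hS.ne']
    field_simp
    simp
  · filter_upwards [ae_restrict_mem measurableSet_Ioc] with u hu
    have : (0:ℝ) ≤ u ^ (S - 1) := Real.rpow_nonneg hu.1.le _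
    positivity

lemma rhoD_Iic {S : ℝ} (hS : 0 < S) (t : ℝ) :
    rhoD S (Iic t) = ENNReal.ofReal (projT t ^ S) := by
  rw [rhoD_apply measurableSet_Iic]
  rcases le_or_gt t 0 with ht | ht
  · have : Iic t ∩ Ioc 0 1 = (∅ : Set ℝ) := by
      ext u; simp only [mem_inter_iff, mem_Iic, mem_Ioc, mem_empty_iff_false, iff_false]
      rintro ⟨h1, h2, _⟩; linarith
    rw [this, projT_of_le ht]
    simp [Real.zero_rpow hS.ne']
  · have heq : Iic t ∩ Ioc 0 1 = Ioc 0 (projT t) := by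
      ext u
      rcases le_or_gt t 1 with ht1 | ht1
      · rw [projT_of_mem ⟨ht.le, ht1⟩]
        simp only [mem_inter_iff, mem_Iic, mem_Ioc]
        constructor
        · rintro ⟨h1, h2, h3⟩; exact ⟨h2, h1⟩
        · rintro ⟨h1, h2⟩; exact ⟨h2, h1, le_trans h2 ht1⟩
      · rw [projT_of_ge ht1.le]
        simp only [mem_inter_iff, mem_Iic, mem_Ioc]
        constructor
        · rintro ⟨h1, h2, h3⟩; exact ⟨h2, h3⟩
        · rintro ⟨h1, h2⟩; exact ⟨le_trans h2 ht1.le, h1, h2⟩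
    rw [heq, lint_Ioc_rpow hS (projT_mem t).1]

lemma measurable_d (S : ℝ) :
    Measurable ((Set.Ioc (0:ℝ) 1).indicator fun u => ENNReal.ofReal (S * u ^ (S - 1))) :=
  (measurable_const.mul (measurable_id.pow measurable_const)).ennreal_ofReal.indicator measurableSet_Ioc

lemma continuous_proj_rpow (ha : 0 < a) : Continuous fun u => projT u ^ a := by
  have h1 : Continuous projT := ((continuous_id.min continuous_const).max continuous_const)
  have h2 : Continuous fun x : ℝ => x ^ a := by
    rw [continuous_iff_continuousAt]
    exact fun x => Real.continuousAt_rpow_const x a (Or.inr ha.le)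
  exact h2.comp h1

lemma rhoD_lintegral (hS : 0 < S) (ha : 0 < a) (t : ℝ) :
    ∫⁻ u, ENNReal.ofReal (projT t ^ a - projT u ^ a) ∂(rhoD S)
      = ENNReal.ofReal (a / (S + a) * projT t ^ (S + a)) := by
  set T := projT t with hT
  have hT0 : 0 ≤ T := (projT_mem t).1
  have hT1 : T ≤ 1 := (projT_mem t).2
  have hmf : Measurable fun u => ENNReal.ofReal (projT t ^ a - projT u ^ a) :=
    (continuous_const.sub (continuous_proj_rpow ha)).measurable.ennreal_ofReal
  rw [rhoD, lintegral_withDensity_eq_lintegral_mul _ (measurable_d S) hmf]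
  have hind : ∀ u, ((Set.Ioc (0:ℝ) 1).indicator (fun u => ENNReal.ofReal (S * u ^ (S - 1))) *
        fun u => ENNReal.ofReal (projT t ^ a - projT u ^ a)) u
      = (Set.Ioc (0:ℝ) 1).indicator
        (fun u => ENNReal.ofReal (S * u ^ (S - 1)) * ENNReal.ofReal (T ^ a - projT u ^ a)) u := by
    intro u
    by_cases h : u ∈ Set.Ioc (0:ℝ) 1 <;> simp [h, hT]
  simp only [hind]
  rw [lintegral_indicator measurableSet_Ioc]
  have hsplit : Set.Ioc (0:ℝ) 1 = Set.Ioc 0 T ∪ Set.Ioc T 1 := (Set.Ioc_union_Ioc_eq_Ioc hT0 hT1).symm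
  rw [hsplit, lintegral_union measurableSet_Ioc (Set.Ioc_disjoint_Ioc_of_le le_rfl)]
  have h0 : ∀ᵐ (u:ℝ) ∂volume, u ∈ Set.Ioc T 1 →
      ENNReal.ofReal (S * u ^ (S - 1)) * ENNReal.ofReal (T ^ a - projT u ^ a)
        = (fun _ => (0:ℝ≥0∞)) u := by
    refine ae_of_all _ fun u hu => ?_
    have hu0 : 0 ≤ u := le_trans hT0 hu.1.le
    have hpr : projT u = u := projT_of_mem ⟨hu0, hu.2⟩
    rw [hpr]
    have h1 : T ^ a ≤ u ^ a := Real.rpow_le_rpow hT0 hu.1.le ha.le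
    have h2 : ENNReal.ofReal (T ^ a - u ^ a) = 0 := ENNReal.ofReal_eq_zero.2 (by linarith)
    rw [h2, mul_zero]
  rw [setLIntegral_congr_fun_ae measurableSet_Ioc h0, lintegral_zero, add_zero]
  -- main piece
  have heqon : EqOn (fun u => ENNReal.ofReal (S * u ^ (S - 1)) * ENNReal.ofReal (T ^ a - projT u ^ a))
      (fun u => ENNReal.ofReal (S * u ^ (S - 1) * (T ^ a - u ^ a))) (Set.Ioc 0 T) := by
    intro u hu
    have hu0 : 0 < u := hu.1
    have hpr : projT u = u := projT_of_mem ⟨hu0.le, le_trans hu.2 hT1⟩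
    have hnn : (0:ℝ) ≤ u ^ (S - 1) := Real.rpow_nonneg hu0.le _
    simp only [hpr]
    rw [← ENNReal.ofReal_mul (by positivity)]
  rw [setLIntegral_congr_fun_ae measurableSet_Ioc (ae_of_all _ heqon)]
  have hgeq : EqOn (fun u : ℝ => S * u ^ (S - 1) * (T ^ a - u ^ a))
      (fun u : ℝ => S * T ^ a * u ^ (S - 1) - S * u ^ (S + a - 1)) (Set.Ioc 0 T) := by
    intro u hu
    have hu0 : (0:ℝ) < u := hu.1
    have : u ^ (S + a - 1) = u ^ (S - 1) * u ^ a := by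
      rw [← Real.rpow_add hu0]; ring_nf
    simp only [this]; ring
  have hint1 : IntegrableOn (fun u : ℝ => S * T ^ a * u ^ (S - 1)) (Set.Ioc 0 T) volume := by
    apply Integrable.const_mul
    have := intervalIntegral.intervalIntegrable_rpow' (a := 0) (b := T) (r := S - 1)
      (by linarith)
    rwa [intervalIntegrable_iff_integrableOn_Ioc_of_le hT0] at this
  have hint2 : IntegrableOn (fun u : ℝ => S * u ^ (S + a - 1)) (Set.Ioc 0 T) volume := by
    apply Integrable.const_mul
    have := intervalIntegral.intervalIntegrable_rpow' (a := 0) (b := T) (r := S + a - 1)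
      (by linarith)
    rwa [intervalIntegrable_iff_integrableOn_Ioc_of_le hT0] at this
  have hint : IntegrableOn (fun u : ℝ => S * u ^ (S - 1) * (T ^ a - u ^ a)) (Set.Ioc 0 T) volume := by
    refine IntegrableOn.congr_fun (hint1.sub hint2) (fun u hu => ?_) measurableSet_Ioc
    simp only [Pi.sub_apply]
    have := hgeq hu
    simp only at this
    linarith [this]
  rw [← ofReal_integral_eq_lintegral_ofReal hint]
  · congr 1
    rw [setIntegral_congr_fun measurableSet_Ioc hgeq, integral_sub hint1 hint2,
      ← intervalIntegral.integral_of_le hT0, ← intervalIntegral.integral_of_le hT0,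
      intervalIntegral.integral_const_mul, intervalIntegral.integral_const_mul,
      integral_rpow (Or.inl (by linarith)), integral_rpow (Or.inl (by linarith))]
    rw [sub_add_cancel, sub_add_cancel, Real.zero_rpow hS.ne', Real.zero_rpow (by positivity)]
    rw [Real.rpow_add' hT0 (by positivity)]
    field_simp
    ring
  · filter_upwards [ae_restrict_mem measurableSet_Ioc] with u hu
    have hu0 : (0:ℝ) < u := hu.1
    have h1 : (0:ℝ) ≤ u ^ (S - 1) := Real.rpow_nonneg hu0.le _
    have h2 : u ^ a ≤ T ^ a := Real.rpow_le_rpow hu0.le hu.2 ha.le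
    have : (0:ℝ) ≤ T ^ a - u ^ a := by linarith
    positivity

lemma measure_eq_smul_rhoD {κ : Measure ℝ} [IsFiniteMeasure κ] {c S : ℝ} (hc : 0 ≤ c) (hS : 0 < S)
    (h : ∀ t, κ (Iic t) = ENNReal.ofReal (c * projT t ^ S)) :
    κ = ENNReal.ofReal c • rhoD S := by
  refine Measure.ext_of_Iic κ _ fun t => ?_
  rw [h t, Measure.smul_apply, smul_eq_mul, rhoD_Iic hS, ← ENNReal.ofReal_mul hc]

lemma cdf_comp {Ω : Type*} [MeasurableSpace Ω] (P : Measure Ω) [IsProbabilityMeasure P]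
    (F : ℝ → ℝ) (hFmono : Monotone F) (hFcont : Continuous F)
    (hF0 : Tendsto F atBot (nhds 0)) (hF1 : Tendsto F atTop (nhds 1))
    {a : ℝ} (ha : 0 < a) (Z : Ω → ℝ)
    (hd : ∀ x, (P {ω | Z ω ≤ x}).toReal = F x ^ a) (t : ℝ) :
    P {ω | F (Z ω) ≤ t} = ENNReal.ofReal (projT t ^ a) := by
  have hFle1 : ∀ x, F x ≤ 1 := fun x => hFmono.ge_of_tendsto hF1 x
  have hFge0 : ∀ x, 0 ≤ F x := fun x => hFmono.le_of_tendsto hF0 x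
  have hd' : ∀ x, P {ω | Z ω ≤ x} = ENNReal.ofReal (F x ^ a) := fun x => by
    rw [← hd x, ENNReal.ofReal_toReal (measure_ne_top P _)]
  rcases le_or_gt 1 t with ht1 | ht1
  · have : {ω | F (Z ω) ≤ t} = univ := eq_univ_of_forall fun ω => le_trans (hFle1 _) ht1
    rw [this, measure_univ, projT_of_ge ht1, Real.one_rpow, ENNReal.ofReal_one]
  rcases lt_or_ge t 0 with ht0 | ht0
  · have : {ω | F (Z ω) ≤ t} = (∅ : Set Ω) := by
      refine eq_empty_of_forall_notMem fun ω hω => ?_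
      exact absurd (le_trans (hFge0 _) hω) (not_le.2 ht0)
    rw [this, measure_empty, projT_of_le ht0.le, Real.zero_rpow ha.ne', ENNReal.ofReal_zero]
  -- now 0 ≤ t < 1
  have hpr : projT t = t := projT_of_mem ⟨ht0, ht1.le⟩
  rcases eq_empty_or_nonempty {x | F x ≤ t} with hA | ⟨x₀, hx₀⟩
  · have hempty : {ω | F (Z ω) ≤ t} = (∅ : Set Ω) :=
      eq_empty_of_forall_notMem fun ω hω => eq_empty_iff_forall_notMem.1 hA (Z ω) hω
    have ht00 : t ≤ 0 := by
      refine ge_of_tendsto hF0 (Eventually.of_forall fun x => ?_)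
      exact le_of_lt (lt_of_not_ge (eq_empty_iff_forall_notMem.1 hA x))
    have : t = 0 := le_antisymm ht00 ht0
    rw [hempty, measure_empty, hpr, this, Real.zero_rpow ha.ne', ENNReal.ofReal_zero]
  · -- nonempty case
    obtain ⟨x₁, hx₁⟩ : ∃ x₁, t < F x₁ := by
      have := hF1.eventually (eventually_gt_nhds ht1)
      exact (this.and (eventually_ge_atTop 0)).exists.imp fun x h => h.1
    have hbdd : BddAbove {x | F x ≤ t} := by
      refine ⟨x₁, fun x hx => le_of_not_gt fun hlt => ?_⟩
      exact absurd (le_trans (hFmono hlt.le) hx) (not_le.2 hx₁)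
    set b := sSup {x | F x ≤ t} with hb
    have hclosed : IsClosed {x | F x ≤ t} := isClosed_le hFcont continuous_const
    have hbmem : F b ≤ t := hclosed.csSup_mem ⟨x₀, hx₀⟩ hbdd
    have hAeq : {x | F x ≤ t} = Iic b :=
      subset_antisymm (fun x hx => le_csSup hbdd hx) (fun x hx => le_trans (hFmono hx) hbmem)
    have hFb : F b = t := by
      refine le_antisymm hbmem ?_
      have hnb : Tendsto (fun n : ℕ => b + 1 / (n + 1)) atTop (nhds b) := by
        have := tendsto_one_div_add_atTop_nhds_zero_nat (𝕜 := ℝ)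
        simpa using tendsto_const_nhds.add this
      have hseq : Tendsto (fun n : ℕ => F (b + 1 / (n + 1))) atTop (nhds (F b)) :=
        (hFcont.tendsto b).comp hnb
      refine ge_of_tendsto hseq (Eventually.of_forall fun n => ?_)
      have hx : b + 1 / ((n:ℝ) + 1) ∉ {x | F x ≤ t} := by
        rw [hAeq, mem_Iic, not_le]
        have : (0:ℝ) < 1 / ((n:ℝ) + 1) := by positivity
        linarith
      exact le_of_lt (lt_of_not_ge hx)
    have hset : {ω | F (Z ω) ≤ t} = {ω | Z ω ≤ b} := by
      ext ω
      constructor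
      · intro hω
        have : Z ω ∈ {x | F x ≤ t} := hω
        rwa [hAeq, mem_Iic] at this
      · intro hω
        exact le_trans (hFmono hω) hFb.le
    rw [hset, hd' b, hFb, hpr]

lemma ofReal_prod_of_nonneg {ι : Type*} (s : Finset ι) (f : ι → ℝ) (h : ∀ i ∈ s, 0 ≤ f i) :
    ENNReal.ofReal (∏ i ∈ s, f i) = ∏ i ∈ s, ENNReal.ofReal (f i) := by
  classical
  induction s using Finset.induction_on with
  | empty => simp
  | insert _ _ hx ih =>
    rename_i a s'
    rw [Finset.prod_insert hx, Finset.prod_insert hx,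
      ENNReal.ofReal_mul (h a (Finset.mem_insert_self a s')),
      ih (fun i hi => h i (Finset.mem_insert_of_mem hi))]

end FAlphaAux

theorem falpha_record_indicators_independent
    {Ω : Type*} [MeasurableSpace Ω] (P : Measure Ω) [IsProbabilityMeasure P]
    (F : ℝ → ℝ) (hFmono : Monotone F) (hFcont : Continuous F)
    (hF0 : Tendsto F atBot (nhds 0)) (hF1 : Tendsto F atTop (nhds 1))
    (α : ℕ → ℝ) (hα : ∀ k, 0 < α k)
    (X : ℕ → Ω → ℝ) (hX : ∀ k, Measurable (X k))
    (hindep : iIndepFun X P)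
    (hdist : ∀ k x, (P {ω | X k ω ≤ x}).toReal = F x ^ α k) :
    iIndepSet (fun k : ℕ => {ω | ∀ j < k, X j ω < X k ω}) P := by
  classical
  have hFle1 : ∀ x, F x ≤ 1 := fun x => hFmono.ge_of_tendsto hF1 x
  have hFge0 : ∀ x, 0 ≤ F x := fun x => hFmono.le_of_tendsto hF0 x
  set Y : ℕ → Ω → ℝ := fun k ω => F (X k ω) with hYdef
  have hY : ∀ k, Measurable (Y k) := fun k => hFcont.measurable.comp (hX k)
  have hYindep : iIndepFun Y P :=
    hindep.comp (fun _ => F) (fun _ => hFcont.measurable)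
  have hYcdf : ∀ k t, P {ω | Y k ω ≤ t} = ENNReal.ofReal (projT t ^ α k) :=
    fun k t => cdf_comp P F hFmono hFcont hF0 hF1 (hα k) (X k) (hdist k) t
  have hνIic : ∀ k u, (P.map (Y k)) (Iic u) = ENNReal.ofReal (projT u ^ α k) := fun k u => by
    rw [Measure.map_apply (hY k) measurableSet_Iic]
    exact hYcdf k u
  have hνIoc : ∀ k u t, (P.map (Y k)) (Ioc u t)
      = ENNReal.ofReal (projT t ^ α k - projT u ^ α k) := by
    intro k u t
    rcases le_or_gt u t with h | h
    · rw [← Set.Iic_sdiff_Iic,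
        measure_diff (Set.Iic_subset_Iic.2 h) nullMeasurableSet_Iic (measure_ne_top _ _),
        hνIic, hνIic]
      exact (ENNReal.ofReal_sub _ (Real.rpow_nonneg (projT_mem u).1 _)).symm
    · rw [Set.Ioc_eq_empty (not_lt.2 h.le), measure_empty]
      refine (ENNReal.ofReal_eq_zero.2 ?_).symm
      have := Real.rpow_le_rpow (projT_mem t).1 (projT_mono h.le) (hα k).le
      linarith
  set S : ℕ → ℝ := fun m => ∑ j ∈ Finset.range (m + 1), α j with hSdef
  have hSpos : ∀ m, 0 < S m := fun m =>
    Finset.sum_pos (fun j _ => hα j) ⟨0, Finset.mem_range.2 (Nat.succ_pos m)⟩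
  have hSsucc : ∀ m, S (m + 1) = S m + α (m + 1) := fun m => Finset.sum_range_succ _ _
  set p : ℕ → ℝ := fun k => α k / S k with hpdef
  have hp0 : ∀ k, 0 ≤ p k := fun k => div_nonneg (hα k).le (hSpos k).le
  set B : ℕ → Set Ω := fun k => {ω | ∀ j < k, Y j ω < Y k ω} with hBdef
  have hBmeas : ∀ k, MeasurableSet (B k) := by
    intro k
    have : B k = ⋂ j ∈ Finset.range k, {ω | Y j ω < Y k ω} := by
      ext ω; simp [hBdef, Finset.mem_range]
    rw [this]
    exact MeasurableSet.biInter (Finset.range k).countable_toSet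
      fun j _ => measurableSet_lt (hY j) (hY k)
  -- the key induction
  have claim : ∀ m (T : Finset ℕ), (∀ k ∈ T, k ≤ m) → ∀ t,
      P ((⋂ k ∈ T, B k) ∩ {ω | ∀ j ≤ m, Y j ω ≤ t})
        = ENNReal.ofReal ((∏ k ∈ T, p k) * projT t ^ S m) := by
    intro m
    induction m with
    | zero =>
      intro T hT t
      have hS0 : S 0 = α 0 := by simp [hSdef]
      have hev : {ω | ∀ j ≤ 0, Y j ω ≤ t} = {ω | Y 0 ω ≤ t} := by
        ext ω; simp [Nat.le_zero]
      rcases Finset.subset_singleton_iff.1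
        (fun k hk => Finset.mem_singleton.2 (Nat.le_zero.1 (hT k hk))) with h | h
      · subst h
        simp only [Finset.notMem_empty, iInter_of_empty, iInter_univ, univ_inter,
          Finset.prod_empty, one_mul, hev]
        rw [hYcdf 0 t, hS0]
      · subst h
        have hB0 : B 0 = univ := by
          ext ω; simp [hBdef]
        simp only [Finset.mem_singleton, iInter_iInter_eq_left, hB0, univ_inter, hev,
          Finset.prod_singleton]
        have hp00 : p 0 = 1 := by
          show α 0 / S 0 = 1
          rw [hS0]; exact div_self (hα 0).ne'
        rw [hYcdf 0 t, hS0, hp00, one_mul]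
    | succ m IH =>
      intro T hT t
      set a := α (m + 1) with hadef
      set T' := T.erase (m + 1) with hT'def
      have hT'le : ∀ k ∈ T', k ≤ m := by
        intro k hk
        have h1 := hT k (Finset.mem_of_mem_erase hk)
        have h2 := Finset.ne_of_mem_erase hk
        omega
      set E := ⋂ k ∈ T', B k with hEdef
      have hEmeas : MeasurableSet E :=
        MeasurableSet.biInter T'.countable_toSet fun k _ => hBmeas k
      set V : Ω → (Fin (m + 1) → ℝ) := fun ω i => Y i ω with hVdef
      have hVmeas : Measurable V := measurable_pi_lambda _ fun i => hY i
      set W := Y (m + 1) with hWdef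
      have hWmeas : Measurable W := hY (m + 1)
      set mx : (Fin (m + 1) → ℝ) → ℝ :=
        Finset.univ.sup' Finset.univ_nonempty (fun (i : Fin (m + 1)) (v : Fin (m + 1) → ℝ) => v i)
        with hmxdef
      have hmxmeas : Measurable mx :=
        Finset.measurable_sup' _ fun i _ => measurable_pi_apply i
      have hmxapp : ∀ v, mx v = Finset.univ.sup' Finset.univ_nonempty v := by
        intro v; rw [hmxdef, Finset.sup'_apply]
      have hmxle : ∀ v u, mx v ≤ u ↔ ∀ i, v i ≤ u := by
        intro v u; simp [hmxapp, Finset.sup'_le_iff]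
      have hmxlt : ∀ v u, mx v < u ↔ ∀ i, v i < u := by
        intro v u; simp [hmxapp, Finset.sup'_lt_iff]
      have hgemx : ∀ (v : Fin (m + 1) → ℝ) i, v i ≤ mx v := fun v i => by
        rw [hmxapp]; exact Finset.le_sup' v (Finset.mem_univ i)
      have hMVle : ∀ ω u, mx (V ω) ≤ u ↔ ∀ j ≤ m, Y j ω ≤ u := by
        intro ω u
        rw [hmxle]
        constructor
        · intro h j hj; exact h ⟨j, by omega⟩
        · intro h i; exact h i.val (Nat.lt_succ_iff.1 i.isLt)
      have hMVlt : ∀ ω u, mx (V ω) < u ↔ ∀ j ≤ m, Y j ω < u := by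
        intro ω u
        rw [hmxlt]
        constructor
        · intro h j hj; exact h ⟨j, by omega⟩
        · intro h i; exact h i.val (Nat.lt_succ_iff.1 i.isLt)
      set em : ℕ → Fin (m + 1) := fun k => ⟨min k m, by omega⟩ with hemdef
      have hemeq : ∀ k, k ≤ m → ∀ ω, V ω (em k) = Y k ω := by
        intro k hk ω; simp [hVdef, hemdef, min_eq_left hk]
      set Ehat : Set (Fin (m + 1) → ℝ) :=
        ⋂ k ∈ T', ⋂ j ∈ Finset.range k, {v | v (em j) < v (em k)} with hEhatdef
      have hEhatmeas : MeasurableSet Ehat := by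
        refine MeasurableSet.biInter T'.countable_toSet fun k _ => ?_
        exact MeasurableSet.biInter (Finset.range k).countable_toSet fun j _ =>
          measurableSet_lt (measurable_pi_apply _) (measurable_pi_apply _)
      have hpre : V ⁻¹' Ehat = E := by
        ext ω
        simp only [hEhatdef, hEdef, mem_preimage, mem_iInter, hBdef, mem_setOf_eq,
          Finset.mem_range]
        constructor
        · intro h k hk j hj
          have hkm := hT'le k hk
          have := h k hk j hj
          rwa [hemeq j (by omega), hemeq k hkm] at this
        · intro h k hk j hj
          have hkm := hT'le k hk
          have := h k hk j hj
          rwa [← hemeq j (by omega), ← hemeq k hkm] at this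
      set M := fun ω => mx (V ω) with hMdef
      have hMmeas : Measurable M := hmxmeas.comp hVmeas
      set κ := (P.restrict E).map M with hκdef
      have hκfin : IsFiniteMeasure κ := by
        constructor
        rw [hκdef, Measure.map_apply hMmeas MeasurableSet.univ]
        exact measure_lt_top (P.restrict E) _
      haveI := hκfin
      have hc'0 : 0 ≤ ∏ k ∈ T', p k := Finset.prod_nonneg fun k _ => hp0 k
      have hκIic : ∀ u, κ (Iic u) = ENNReal.ofReal ((∏ k ∈ T', p k) * projT u ^ S m) := by
        intro u
        rw [hκdef, Measure.map_apply hMmeas measurableSet_Iic,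
          Measure.restrict_apply (hMmeas measurableSet_Iic)]
        have hset : M ⁻¹' Iic u ∩ E = E ∩ {ω | ∀ j ≤ m, Y j ω ≤ u} := by
          ext ω
          simp only [mem_inter_iff, mem_preimage, mem_Iic, mem_setOf_eq, hMdef]
          rw [hMVle ω u]
          tauto
        rw [hset]
        exact IH T' hT'le u
      have hκeq : κ = ENNReal.ofReal (∏ k ∈ T', p k) • rhoD (S m) :=
        measure_eq_smul_rhoD hc'0 (hSpos m) hκIic
      have hVW : IndepFun V W P := by
        have hdisj : Disjoint (Finset.range (m + 1)) ({m + 1} : Finset ℕ) := by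
          simp [Finset.disjoint_singleton_right]
        have h1 := hYindep.indepFun_finset (Finset.range (m + 1)) {m + 1} hdisj hY
        have hφ : Measurable (fun g : ((Finset.range (m + 1) : Finset ℕ) → ℝ) =>
            (fun i : Fin (m + 1) => g ⟨i.val, Finset.mem_range.2 i.isLt⟩)) :=
          measurable_pi_lambda _ fun i => measurable_pi_apply _
        have hψ : Measurable (fun g : (({m + 1} : Finset ℕ) → ℝ) =>
            g ⟨m + 1, Finset.mem_singleton_self (m + 1)⟩) := measurable_pi_apply _
        exact h1.comp hφ hψ
      have hmap : P.map (fun ω => (V ω, W ω)) = (P.map V).prod (P.map W) :=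
        (indepFun_iff_map_prod_eq_prod_map_map hVmeas.aemeasurable hWmeas.aemeasurable).1 hVW
      have hEmem : ∀ ω, ω ∈ E ↔ ∀ k ∈ T', ω ∈ B k := fun ω => by
        rw [hEdef]; simp [mem_iInter]
      have hVE : ∀ ω, V ω ∈ Ehat ↔ ω ∈ E := fun ω => by rw [← hpre]; exact Iff.rfl
      by_cases hmem : m + 1 ∈ T
      · -- the new index is a "record" index
        set C : Set ((Fin (m + 1) → ℝ) × ℝ) :=
          (Ehat ×ˢ (univ : Set ℝ)) ∩ ({q | mx q.1 < q.2} ∩ ((univ : Set (Fin (m + 1) → ℝ)) ×ˢ Iic t))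
          with hCdef
        have hCmeas : MeasurableSet C :=
          (hEhatmeas.prod MeasurableSet.univ).inter
            ((measurableSet_lt (hmxmeas.comp measurable_fst) measurable_snd).inter
              (MeasurableSet.univ.prod measurableSet_Iic))
        have hCmem : ∀ v w, (v, w) ∈ C ↔ v ∈ Ehat ∧ mx v < w ∧ w ≤ t := by
          intro v w
          simp [hCdef, and_assoc]
        have hevent : (⋂ k ∈ T, B k) ∩ {ω | ∀ j ≤ m + 1, Y j ω ≤ t}
            = (fun ω => (V ω, W ω)) ⁻¹' C := by
          ext ω
          rw [mem_preimage, hCmem, hVE]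
          simp only [mem_inter_iff, mem_iInter, mem_setOf_eq]
          constructor
          · rintro ⟨hB, hle⟩
            refine ⟨(hEmem ω).2 fun k hk => hB k (Finset.mem_of_mem_erase hk), ?_,
              hle (m + 1) le_rfl⟩
            rw [hMVlt]
            intro j hj
            exact hB (m + 1) hmem j (by omega)
          · rintro ⟨hE1, hlt, hWt⟩
            constructor
            · intro k hk
              by_cases hk1 : k = m + 1
              · subst hk1
                intro j hj
                exact (hMVlt ω (W ω)).1 hlt j (by omega)
              · exact (hEmem ω).1 hE1 k (Finset.mem_erase.2 ⟨hk1, hk⟩)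
            · intro j hj
              rcases Nat.lt_succ_iff_lt_or_eq.1 (Nat.lt_succ_of_le hj) with h | h
              · have h1 : Y j ω ≤ mx (V ω) := hgemx (V ω) ⟨j, by omega⟩
                exact le_trans h1 (le_trans hlt.le hWt)
              · subst h; exact hWt
        have hfmeas : Measurable fun u : ℝ => ENNReal.ofReal (projT t ^ a - projT u ^ a) :=
          (continuous_const.sub (continuous_proj_rpow (hα (m + 1)))).measurable.ennreal_ofReal
        have hslice : ∀ v, (P.map W) (Prod.mk v ⁻¹' C)
            = Ehat.indicator (fun v => ENNReal.ofReal (projT t ^ a - projT (mx v) ^ a)) v := by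
          intro v
          by_cases hv : v ∈ Ehat
          · rw [indicator_of_mem hv]
            have hpc : Prod.mk v ⁻¹' C = Ioc (mx v) t := by
              ext w
              simp [mem_preimage, hCmem, hv, mem_Ioc]
            rw [hpc, hνIoc]
          · rw [indicator_of_notMem hv]
            have hpc : Prod.mk v ⁻¹' C = ∅ := by
              ext w
              simp [mem_preimage, hCmem, hv]
            rw [hpc, measure_empty]
        have h1 : ∫⁻ v in Ehat, ENNReal.ofReal (projT t ^ a - projT (mx v) ^ a) ∂(P.map V)
            = ∫⁻ u, ENNReal.ofReal (projT t ^ a - projT u ^ a) ∂κ := by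
          have hfm2 : Measurable fun v : Fin (m + 1) → ℝ =>
              ENNReal.ofReal (projT t ^ a - projT (mx v) ^ a) := hfmeas.comp hmxmeas
          rw [Measure.restrict_map hVmeas hEhatmeas, hpre, hκdef,
            lintegral_map hfmeas hMmeas, lintegral_map hfm2 hVmeas]
        rw [hevent, ← Measure.map_apply (hVmeas.prodMk hWmeas) hCmeas, hmap,
          Measure.prod_apply hCmeas, lintegral_congr hslice, lintegral_indicator hEhatmeas,
          h1, hκeq, lintegral_smul_measure, rhoD_lintegral (hSpos m) (hα (m + 1)) t,
          smul_eq_mul, ← ENNReal.ofReal_mul hc'0]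
        congr 1
        have hprod : ∏ k ∈ T, p k = p (m + 1) * ∏ k ∈ T', p k :=
          (Finset.mul_prod_erase T p hmem).symm
        have hpm : p (m + 1) = a / (S m + a) := by
          show α (m + 1) / S (m + 1) = _
          rw [hSsucc m]
        rw [hprod, hSsucc m, hpm]
        ring
      · -- the new index is not a record index
        have hTT' : T' = T := by rw [hT'def]; exact Finset.erase_eq_of_notMem hmem
        set C : Set ((Fin (m + 1) → ℝ) × ℝ) := (Ehat ∩ {v | mx v ≤ t}) ×ˢ Iic t with hCdef
        have hmxtmeas : MeasurableSet {v : Fin (m + 1) → ℝ | mx v ≤ t} := hmxmeas measurableSet_Iic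
        have hCmeas : MeasurableSet C := (hEhatmeas.inter hmxtmeas).prod measurableSet_Iic
        have hevent : (⋂ k ∈ T, B k) ∩ {ω | ∀ j ≤ m + 1, Y j ω ≤ t}
            = (fun ω => (V ω, W ω)) ⁻¹' C := by
          ext ω
          rw [mem_preimage, hCdef]
          simp only [mem_inter_iff, mem_iInter, mem_setOf_eq, mem_prod, mem_Iic]
          rw [hVE]
          constructor
          · rintro ⟨hB, hle⟩
            refine ⟨⟨(hEmem ω).2 fun k hk => hB k (Finset.mem_of_mem_erase hk), ?_⟩,
              hle (m + 1) le_rfl⟩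
            exact (hMVle ω t).2 fun j hj => hle j (by omega)
          · rintro ⟨⟨hE1, hmxt⟩, hWt⟩
            constructor
            · intro k hk
              exact (hEmem ω).1 hE1 k (by rw [hTT']; exact hk)
            · intro j hj
              rcases Nat.lt_succ_iff_lt_or_eq.1 (Nat.lt_succ_of_le hj) with h | h
              · exact (hMVle ω t).1 hmxt j (by omega)
              · subst h; exact hWt
        have hleft : (P.map V) (Ehat ∩ {v | mx v ≤ t})
            = ENNReal.ofReal ((∏ k ∈ T', p k) * projT t ^ S m) := by
          rw [Measure.map_apply hVmeas (hEhatmeas.inter hmxtmeas), preimage_inter, hpre]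
          have hms : V ⁻¹' {v | mx v ≤ t} = {ω | ∀ j ≤ m, Y j ω ≤ t} := by
            ext ω
            simp only [mem_preimage, mem_setOf_eq]
            exact hMVle ω t
          rw [hms]
          exact IH T' hT'le t
        rw [hevent, ← Measure.map_apply (hVmeas.prodMk hWmeas) hCmeas, hmap, hCdef,
          Measure.prod_prod, hleft, hνIic (m + 1) t,
          ← ENNReal.ofReal_mul (mul_nonneg hc'0 (Real.rpow_nonneg (projT_mem t).1 _))]
        congr 1
        rw [← hTT', hSsucc m,
          Real.rpow_add' (projT_mem t).1 (ne_of_gt (add_pos (hSpos m) (hα (m + 1))))]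
        ring
  -- product formula for the B-events
  have hBprod : ∀ T : Finset ℕ, P (⋂ k ∈ T, B k) = ENNReal.ofReal (∏ k ∈ T, p k) := by
    intro T
    rcases T.eq_empty_or_nonempty with h | h
    · subst h
      simp
    · have h1 := claim (T.max' h) T (fun k hk => T.le_max' k hk) 1
      have h2 : {ω | ∀ j ≤ T.max' h, Y j ω ≤ (1 : ℝ)} = univ :=
        eq_univ_of_forall fun ω j hj => hFle1 _
      rw [h2, inter_univ] at h1
      rw [h1, projT_of_ge le_rfl, Real.one_rpow, mul_one]
  -- ties have probability zero
  have hdiag : ∀ j k, j ≠ k → P {ω | Y j ω = Y k ω} = 0 := by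
    intro j k hjk
    have hind : IndepFun (Y j) (Y k) P := hYindep.indepFun hjk
    have hm : P.map (fun ω => (Y j ω, Y k ω)) = (P.map (Y j)).prod (P.map (Y k)) :=
      (indepFun_iff_map_prod_eq_prod_map_map (hY j).aemeasurable (hY k).aemeasurable).1 hind
    have hdm : MeasurableSet {q : ℝ × ℝ | q.1 = q.2} :=
      measurableSet_eq_fun measurable_fst measurable_snd
    have hνk : P.map (Y k) = rhoD (α k) := by
      haveI : IsFiniteMeasure (P.map (Y k)) := by
        constructor
        rw [Measure.map_apply (hY k) MeasurableSet.univ]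
        exact measure_lt_top P _
      have h := measure_eq_smul_rhoD zero_le_one (hα k)
        (fun t => by rw [hνIic k t, one_mul])
      simpa [ENNReal.ofReal_one, one_smul] using h
    have hpre2 : {ω | Y j ω = Y k ω} = (fun ω => (Y j ω, Y k ω)) ⁻¹' {q : ℝ × ℝ | q.1 = q.2} := rfl
    rw [hpre2, ← Measure.map_apply ((hY j).prodMk (hY k)) hdm, hm, Measure.prod_apply hdm]
    have hsl : ∀ x : ℝ, (P.map (Y k)) (Prod.mk x ⁻¹' {q : ℝ × ℝ | q.1 = q.2}) = 0 := by
      intro x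
      have hx : Prod.mk x ⁻¹' {q : ℝ × ℝ | q.1 = q.2} = {x} := by
        ext y; simp [eq_comm]
      rw [hx, hνk, rhoD]
      exact withDensity_absolutelyContinuous _ _ (measure_singleton x)
    rw [lintegral_congr hsl, lintegral_zero]
  -- relate the record events for `X` and for `Y`
  set A : ℕ → Set Ω := fun k => {ω | ∀ j < k, X j ω < X k ω} with hAdef
  have hAmeas : ∀ k, MeasurableSet (A k) := by
    intro k
    have h : A k = ⋂ j ∈ Finset.range k, {ω | X j ω < X k ω} := by
      ext ω; simp [hAdef, Finset.mem_range]
    rw [h]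
    exact MeasurableSet.biInter (Finset.range k).countable_toSet fun j _ =>
      measurableSet_lt (hX j) (hX k)
  have hBA : ∀ k, B k ⊆ A k := by
    intro k ω h j hj
    by_contra hnot
    push_neg at hnot
    exact absurd (h j hj) (not_lt.2 (hFmono hnot))
  have hAB : ∀ T : Finset ℕ, P (⋂ k ∈ T, A k) = P (⋂ k ∈ T, B k) := by
    intro T
    refine le_antisymm ?_ (measure_mono (iInter₂_mono fun k _ => hBA k))
    set N := ⋃ k ∈ T, ⋃ j ∈ Finset.range k, {ω | Y j ω = Y k ω} with hNdef
    have hN0 : P N = 0 := by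
      rw [hNdef]
      refine (measure_biUnion_null_iff T.countable_toSet).2 fun k _ => ?_
      refine (measure_biUnion_null_iff (Finset.range k).countable_toSet).2 fun j hj => ?_
      refine hdiag j k ?_
      have := Finset.mem_range.1 hj
      omega
    have hsub : (⋂ k ∈ T, A k) ⊆ (⋂ k ∈ T, B k) ∪ N := by
      intro ω hω
      by_cases hn : ω ∈ N
      · exact Or.inr hn
      · left
        simp only [mem_iInter] at hω ⊢
        intro k hk j hj
        have hx : X j ω < X k ω := hω k hk j hj
        have hle : Y j ω ≤ Y k ω := hFmono hx.le
        have hne : Y j ω ≠ Y k ω := by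
          intro heq
          apply hn
          rw [hNdef]
          exact mem_iUnion₂.2 ⟨k, hk, mem_iUnion₂.2 ⟨j, Finset.mem_range.2 hj, heq⟩⟩
        exact lt_of_le_of_ne hle hne
    calc P (⋂ k ∈ T, A k) ≤ P ((⋂ k ∈ T, B k) ∪ N) := measure_mono hsub
      _ ≤ P (⋂ k ∈ T, B k) + P N := measure_union_le _ _
      _ = P (⋂ k ∈ T, B k) := by rw [hN0, add_zero]
  -- conclude
  rw [iIndepSet_iff_meas_biInter hAmeas]
  intro s
  have hsingle : ∀ i, P (A i) = ENNReal.ofReal (p i) := by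
    intro i
    have h := (hAB {i}).trans (hBprod {i})
    simpa using h
  rw [hAB s, hBprod s, ofReal_prod_of_nonneg s p (fun i _ => hp0 i)]
  exact Finset.prod_congr rfl fun i _ => (hsingle i).symm
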